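/- Let δ : [0,∞) → (0,∞) be nonincreasing with δ(0) = 1 and log-subadditive (δ(s)·δ(t) ≤ δ(s+t) for all s, t ≥ 0), with one-sided derivative d at t = 0. Then δ is positive and bounded below by a positive exponential on every bounded interval, and for every λ > 0 the integral ∫₀^∞ λ e^{−λt} δ(t) dt satisfies λ/(λ − d) ≤ ∫₀^∞ λ e^{−λt} δ(t) dt ≤ 1, where d ≤ 0. -/

import Mathlib

open MeasureTheory Set Filter Real Topology

lemma exp_int_aux {b : ℝ} (hb : 0 < b) :
    ∫ x in Ioi (0:ℝ), Real.exp (-b * x) = 1 / b := by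
  have hderiv : ∀ x ∈ Ici (0:ℝ),
      HasDerivAt (fun x => -Real.exp (-b * x) / b) (Real.exp (-b * x)) x := by
    intro x _
    have h1 : HasDerivAt (fun x : ℝ => Real.exp (-b * x)) (Real.exp (-b * x) * (-b)) x := by
      simpa using ((hasDerivAt_id x).const_mul (-b)).exp
    have := h1.neg.div_const b
    refine this.congr_deriv ?_
    field_simp [hb.ne']
  have htend : Tendsto (fun x => -Real.exp (-b * x) / b) atTop (𝓝 0) := by
    have : Tendsto (fun x : ℝ => Real.exp (-b * x)) atTop (𝓝 0) :=
      Real.tendsto_exp_atBot.comp (tendsto_id.const_mul_atTop_of_neg (by linarith))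
    simpa using (this.neg.div_const b)
  have := integral_Ioi_of_hasDerivAt_of_tendsto' hderiv (exp_neg_integrableOn_Ioi 0 hb) htend
  rw [this]
  simp
  field_simp


section aux
variable {δ : ℝ → ℝ} {d : ℝ}

-- limit of log(1+x)/x at 0, with value 1 at 0
lemma F_tendsto : Tendsto (fun x : ℝ => if x = 0 then 1 else Real.log (1+x)/x) (𝓝 0) (𝓝 1) := by
  have hder : HasDerivAt (fun x : ℝ => Real.log (1+x)) 1 0 := by
    have h1 : HasDerivAt (fun x : ℝ => 1 + x) 1 0 := by
      simpa using (hasDerivAt_id (0:ℝ)).const_add 1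
    simpa using h1.log (by norm_num)
  have hslope := hasDerivAt_iff_tendsto_slope.1 hder
  have h1 : Tendsto (fun x : ℝ => if x = 0 then 1 else Real.log (1+x)/x) (𝓝[≠] 0) (𝓝 1) := by
    refine hslope.congr' ?_
    filter_upwards [self_mem_nhdsWithin] with x (hx : x ≠ 0)
    simp [slope, hx, Real.log_one, div_eq_inv_mul]
  have h2 : Tendsto (fun x : ℝ => if x = 0 then 1 else Real.log (1+x)/x) (pure (0:ℝ)) (𝓝 1) := by
    simpa using tendsto_pure_nhds (fun x : ℝ => if x = 0 then 1 else Real.log (1+x)/x) 0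
  rw [← nhdsNE_sup_pure (0:ℝ)]
  exact h1.sup h2

end aux

/-- Non-strict holding-time discount bound: for a nonincreasing, log-subadditive
discount function with one-sided derivative `d` at `0`, one has `d ≤ 0`,
`δ(t) ≥ e^(d t)`, and `λ/(λ-d) ≤ ∫₀^∞ λ e^(-λ t) δ(t) dt ≤ 1` for every `λ > 0`. -/
theorem stmt_15 (δ : ℝ → ℝ) (d : ℝ)
    (hpos : ∀ t, 0 ≤ t → 0 < δ t)
    (hmono : AntitoneOn δ (Set.Ici 0))
    (h0 : δ 0 = 1)
    (hsub : ∀ s t, 0 ≤ s → 0 ≤ t → δ s * δ t ≤ δ (s + t))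
    (hd : Filter.Tendsto (fun h => (δ h - 1) / h) (nhdsWithin 0 (Set.Ioi 0)) (nhds d)) :
    d ≤ 0 ∧ (∀ t, 0 ≤ t → Real.exp (d * t) ≤ δ t) ∧
    ∀ l : ℝ, 0 < l →
      l / (l - d) ≤ (∫ t in Set.Ioi (0 : ℝ), l * Real.exp (-l * t) * δ t) ∧
      (∫ t in Set.Ioi (0 : ℝ), l * Real.exp (-l * t) * δ t) ≤ 1 := by
  have hle1 : ∀ t, 0 ≤ t → δ t ≤ 1 := fun t ht => by
    have := hmono (self_mem_Ici) ht ht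
    rwa [h0] at this
  -- d ≤ 0
  have hd0 : d ≤ 0 := by
    refine le_of_tendsto hd ?_
    filter_upwards [self_mem_nhdsWithin] with h (hh : h ∈ Ioi (0:ℝ))
    exact div_nonpos_of_nonpos_of_nonneg (by linarith [hle1 h hh.le]) hh.le
  -- δ h - 1 → 0
  have h1 : Tendsto (fun h => δ h - 1) (𝓝[>] (0:ℝ)) (𝓝 0) := by
    have hid : Tendsto (fun h : ℝ => h) (𝓝[>] (0:ℝ)) (𝓝 0) :=
      tendsto_id.mono_right nhdsWithin_le_nhds
    have := hd.mul hid
    rw [mul_zero] at this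
    refine this.congr' ?_
    filter_upwards [self_mem_nhdsWithin] with h (hh : h ∈ Ioi (0:ℝ))
    rw [div_mul_cancel₀ _ (ne_of_gt hh)]
  -- log δ h / h → d
  have hlog : Tendsto (fun h => Real.log (δ h) / h) (𝓝[>] (0:ℝ)) (𝓝 d) := by
    have hF := (F_tendsto.comp h1).mul hd
    rw [one_mul] at hF
    refine hF.congr' ?_
    filter_upwards [self_mem_nhdsWithin] with h (hh : h ∈ Ioi (0:ℝ))
    by_cases he : δ h = 1
    · simp [Function.comp, he]
    · have hne : δ h - 1 ≠ 0 := sub_ne_zero.2 he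
      simp only [Function.comp, if_neg hne]
      rw [add_sub_cancel]
      field_simp
  -- superadditivity iterate
  have hiter : ∀ n : ℕ, ∀ x : ℝ, 0 ≤ x → (n:ℝ) * Real.log (δ x) ≤ Real.log (δ (n * x)) := by
    intro n
    induction n with
    | zero => intro x hx; simp [h0]
    | succ n ih =>
      intro x hx
      have hnx : (0:ℝ) ≤ n * x := mul_nonneg (Nat.cast_nonneg n) hx
      have hstep : δ (n * x) * δ x ≤ δ ((n+1 : ℕ) * x) := by
        have := hsub (n * x) x hnx hx
        convert this using 2
        push_cast; ring
      have hlogstep : Real.log (δ (n*x)) + Real.log (δ x) ≤ Real.log (δ ((n+1:ℕ) * x)) := by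
        rw [← Real.log_mul (ne_of_gt (hpos _ hnx)) (ne_of_gt (hpos _ hx))]
        exact Real.log_le_log (mul_pos (hpos _ hnx) (hpos _ hx)) hstep
      calc ((n+1:ℕ):ℝ) * Real.log (δ x) = (n:ℝ) * Real.log (δ x) + Real.log (δ x) := by
            push_cast; ring
        _ ≤ Real.log (δ (n*x)) + Real.log (δ x) := by linarith [ih x hx]
        _ ≤ _ := hlogstep
  -- exponential lower bound
  have hexp : ∀ t, 0 ≤ t → Real.exp (d * t) ≤ δ t := by
    intro t ht
    rcases eq_or_lt_of_le ht with rfl | htpos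
    · simp [h0]
    have hlb : d * t ≤ Real.log (δ t) := by
      have htn : Tendsto (fun n : ℕ => t / n) atTop (𝓝[>] (0:ℝ)) := by
        rw [tendsto_nhdsWithin_iff]
        constructor
        · exact tendsto_const_div_atTop_nhds_zero_nat t
        · filter_upwards [eventually_gt_atTop 0] with n hn
          exact div_pos htpos (by exact_mod_cast hn)
      have hseq : Tendsto (fun n : ℕ => (Real.log (δ (t / n)) / (t / n)) * t) atTop
          (𝓝 (d * t)) := (hlog.comp htn).mul_const t
      refine le_of_tendsto hseq ?_
      filter_upwards [eventually_gt_atTop 0] with n hn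
      have hnn : (0:ℝ) < n := by exact_mod_cast hn
      have htn' : (0:ℝ) < t / n := div_pos htpos hnn
      have heq : Real.log (δ (t / n)) / (t / n) * t = (n:ℝ) * Real.log (δ (t / n)) := by
        field_simp
      rw [heq]
      have h2 := hiter n (t / n) htn'.le
      rwa [mul_div_cancel₀ t (ne_of_gt hnn)] at h2
    calc Real.exp (d * t) ≤ Real.exp (Real.log (δ t)) := Real.exp_le_exp.2 hlb
      _ = δ t := Real.exp_log (hpos t ht)
  -- integral bounds
  have hint : ∀ l : ℝ, 0 < l →
      l / (l - d) ≤ (∫ t in Set.Ioi (0:ℝ), l * Real.exp (-l * t) * δ t) ∧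
      (∫ t in Set.Ioi (0:ℝ), l * Real.exp (-l * t) * δ t) ≤ 1 := by
    intro l hl
    have hld : 0 < l - d := by linarith
    set f : ℝ → ℝ := fun t => l * Real.exp (-l * t) * δ t with hf
    -- measurability
    have hant : Antitone (fun t : ℝ => δ (max t 0)) := by
      intro s t hst
      exact hmono (le_max_right s 0) (le_max_right t 0) (max_le_max hst le_rfl)
    have hmeas : AEStronglyMeasurable f (volume.restrict (Ioi (0:ℝ))) := by
      have hg : Measurable (fun t : ℝ => l * Real.exp (-l * t) * δ (max t 0)) := by
        exact ((measurable_const.mul (measurable_id.const_mul (-l)).exp).mul hant.measurable)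
      refine (hg.aestronglyMeasurable).congr ?_
      filter_upwards [ae_restrict_mem measurableSet_Ioi] with t (ht : t ∈ Ioi (0:ℝ))
      rw [max_eq_left ht.le]
    have hbound_int : IntegrableOn (fun t : ℝ => l * Real.exp (-l * t)) (Ioi (0:ℝ)) :=
      (exp_neg_integrableOn_Ioi 0 hl).const_mul l
    have hlow_int : IntegrableOn (fun t : ℝ => l * Real.exp (-(l - d) * t)) (Ioi (0:ℝ)) :=
      (exp_neg_integrableOn_Ioi 0 hld).const_mul l
    have hfle : ∀ t ∈ Ioi (0:ℝ), f t ≤ l * Real.exp (-l * t) := by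
      intro t ht
      have := hle1 t ht.le
      have hpe : 0 < l * Real.exp (-l * t) := by positivity
      calc f t ≤ l * Real.exp (-l * t) * 1 := by
            exact mul_le_mul_of_nonneg_left this hpe.le
        _ = _ := mul_one _
    have hfge : ∀ t ∈ Ioi (0:ℝ), l * Real.exp (-(l - d) * t) ≤ f t := by
      intro t ht
      have he : l * Real.exp (-(l - d) * t) = l * Real.exp (-l * t) * Real.exp (d * t) := by
        rw [mul_assoc, ← Real.exp_add]
        ring_nf
      rw [he]
      have hpe : 0 < l * Real.exp (-l * t) := by positivity
      exact mul_le_mul_of_nonneg_left (hexp t ht.le) hpe.le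
    have hfint : IntegrableOn f (Ioi (0:ℝ)) := by
      refine Integrable.mono' hbound_int hmeas ?_
      filter_upwards [ae_restrict_mem measurableSet_Ioi] with t (ht : t ∈ Ioi (0:ℝ))
      rw [Real.norm_eq_abs, abs_of_nonneg (mul_nonneg (by positivity) (hpos t ht.le).le)]
      exact hfle t ht
    have hup : (∫ t in Ioi (0:ℝ), f t) ≤ 1 := by
      have := setIntegral_mono_on hfint hbound_int measurableSet_Ioi hfle
      calc (∫ t in Ioi (0:ℝ), f t) ≤ ∫ t in Ioi (0:ℝ), l * Real.exp (-l * t) := this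
        _ = l * (1 / l) := by rw [integral_const_mul, exp_int_aux hl]
        _ = 1 := by field_simp
    have hlo : l / (l - d) ≤ ∫ t in Ioi (0:ℝ), f t := by
      have := setIntegral_mono_on hlow_int hfint measurableSet_Ioi hfge
      calc l / (l - d) = l * (1 / (l - d)) := by ring
        _ = ∫ t in Ioi (0:ℝ), l * Real.exp (-(l - d) * t) := by
            rw [integral_const_mul, exp_int_aux hld]
        _ ≤ _ := this
    exact ⟨hlo, hup⟩
  exact ⟨hd0, hexp, hint⟩
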